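/- arXiv:1905.10716 — 8 statements merged into one kernel-verified Lean document; each statement's English description precedes it below -/
import Mathlib

section
/- For nonzero points a, b ∈ ℝ² and β > 1, the origin O is contained in the β-influence region S_β(a,b) if and only if both ⟨a,b⟩ ≤ (1/(2k))‖a‖² and ‖b - ka‖² ≥ (k‖a‖)², where k = β/(2(β-1)). Equivalently, O ∈ S_β(a,b) iff b lies in the closed halfspace H_o(p) = {x : ⟨a,x⟩ ≤ (1/(2k))‖a‖²} but not in the interior of the ball B(ka, k‖a‖). -/
open scoped RealInnerProductSpace

theorem origin_mem_beta_influence_iff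
    (β : ℝ) (hβ : 1 < β) (a b : EuclideanSpace ℝ (Fin 2))
    (ha : a ≠ 0) (hb : b ≠ 0) (k : ℝ) (hk : k = β / (2 * (β - 1))) :
    (0 : EuclideanSpace ℝ (Fin 2)) ∈
        Metric.closedBall ((β/2) • a + (1 - β/2) • b) ((β/2) * ‖a - b‖) ∩
        Metric.closedBall ((β/2) • b + (1 - β/2) • a) ((β/2) * ‖a - b‖) ↔
      (⟪a, b⟫ ≤ (1 / (2 * k)) * ‖a‖ ^ 2 ∧ ‖b - k • a‖ ^ 2 ≥ (k * ‖a‖) ^ 2) := by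
  have hβ0 : (0:ℝ) < β := by linarith
  have hb1 : (0:ℝ) < β - 1 := by linarith
  have hkpos : 0 < k := by rw [hk]; positivity
  have hk' : 2 * k * (β - 1) = β := by
    rw [hk]; field_simp
  have expand : ∀ (x y : EuclideanSpace ℝ (Fin 2)) (s t : ℝ), ‖s • x + t • y‖ ^ 2
      = s^2 * ‖x‖^2 + 2*s*t*⟪x,y⟫ + t^2 * ‖y‖^2 := by
    intro x y s t
    rw [norm_add_sq_real, real_inner_smul_left, real_inner_smul_right, norm_smul, norm_smul,
      mul_pow, mul_pow, Real.norm_eq_abs, Real.norm_eq_abs, sq_abs, sq_abs]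
    ring
  have hab : ‖a - b‖ ^ 2 = ‖a‖^2 - 2*⟪a,b⟫ + ‖b‖^2 := by
    rw [norm_sub_sq_real]
  have hbka : ‖b - k • a‖ ^ 2 = ‖b‖^2 - 2*k*⟪a,b⟫ + k^2*‖a‖^2 := by
    rw [norm_sub_sq_real, real_inner_smul_right, norm_smul, Real.norm_eq_abs, mul_pow, sq_abs,
      real_inner_comm b a]
    ring
  have hr : (0:ℝ) ≤ (β/2) * ‖a - b‖ := by positivity
  simp only [Set.mem_inter_iff, Metric.mem_closedBall, dist_zero_left]
  rw [← pow_le_pow_iff_left₀ (norm_nonneg _) hr two_ne_zero,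
      ← pow_le_pow_iff_left₀ (norm_nonneg _) hr two_ne_zero]
  rw [expand a b, expand b a, mul_pow, hab, hbka]
  have hiba : ⟪b, a⟫ = ⟪a, b⟫ := real_inner_comm a b
  rw [hiba]
  have hko : (1:ℝ) / (2 * k) = (β - 1) / β := by
    rw [hk]; field_simp
  rw [hko]
  constructor
  · rintro ⟨h1, h2⟩
    constructor
    · rw [div_mul_eq_mul_div, le_div_iff₀ hβ0]
      nlinarith [h2]
    · nlinarith [h1, hk', mul_le_mul_of_nonneg_left h1 (le_of_lt hkpos)]
  · rintro ⟨h1, h2⟩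
    rw [div_mul_eq_mul_div, le_div_iff₀ hβ0] at h1
    constructor
    · nlinarith [h2, hk', mul_pos hkpos hb1]
    · nlinarith [h1]
end

section
/- For 1 ≤ β < β', a finite data set S ⊂ ℝ² of points, and a query point q ∈ ℝ², the β'-skeleton depth of q with respect to S is at least the β-skeleton depth: SkD_{β'}(q;S) ≥ SkD_β(q;S). -/
open scoped Classical

/-- The β-influence region of two points in the plane. -/
noncomputable def betaInfluence (β : ℝ) (a b : EuclideanSpace ℝ (Fin 2)) :
    Set (EuclideanSpace ℝ (Fin 2)) :=
  Metric.closedBall ((β/2) • a + (1 - β/2) • b) ((β/2) * ‖a - b‖) ∩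
    Metric.closedBall ((β/2) • b + (1 - β/2) • a) ((β/2) * ‖a - b‖)

/-- The unnormalized β-skeleton depth: the number of (unordered) pairs of data
points whose β-influence region contains the query point. -/
noncomputable def skeletonDepth (β : ℝ) (q : EuclideanSpace ℝ (Fin 2))
    (S : Finset (EuclideanSpace ℝ (Fin 2))) : ℕ :=
  ((S.powersetCard 2).filter
    (fun P => ∃ x ∈ P, ∃ y ∈ P, x ≠ y ∧ q ∈ betaInfluence β x y)).card

lemma ball_mono_aux {β β' : ℝ} (h : β ≤ β') (x y : EuclideanSpace ℝ (Fin 2)) :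
    Metric.closedBall ((β/2) • x + (1 - β/2) • y) ((β/2) * ‖x - y‖) ⊆
      Metric.closedBall ((β'/2) • x + (1 - β'/2) • y) ((β'/2) * ‖x - y‖) := by
  apply Metric.closedBall_subset_closedBall'
  have hd : dist ((β/2) • x + (1 - β/2) • y) ((β'/2) • x + (1 - β'/2) • y)
      = ((β' - β)/2) * ‖x - y‖ := by
    rw [dist_eq_norm]
    have he : (β/2) • x + (1 - β/2) • y - ((β'/2) • x + (1 - β'/2) • y)
        = ((β - β')/2) • (x - y) := by module
    rw [he, norm_smul, Real.norm_eq_abs]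
    have : |(β - β')/2| = (β' - β)/2 := by
      rw [abs_of_nonpos (by linarith)]; ring
    rw [this]
  rw [hd]
  have := norm_nonneg (x - y)
  nlinarith

lemma influence_mono {β β' : ℝ} (h : β ≤ β') {a b q : EuclideanSpace ℝ (Fin 2)}
    (hq : q ∈ betaInfluence β a b) : q ∈ betaInfluence β' a b := by
  obtain ⟨h1, h2⟩ := hq
  refine ⟨ball_mono_aux h a b h1, ?_⟩
  have h2' := ball_mono_aux h b a (by rwa [norm_sub_rev] at h2)
  rwa [norm_sub_rev b a] at h2'

theorem skeletonDepth_monotone (β β' : ℝ) (hβ : 1 ≤ β) (hββ' : β < β')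
    (S : Finset (EuclideanSpace ℝ (Fin 2))) (q : EuclideanSpace ℝ (Fin 2)) :
    skeletonDepth β q S ≤ skeletonDepth β' q S := by
  apply Finset.card_le_card
  intro P hP
  simp only [Finset.mem_filter] at hP ⊢
  obtain ⟨hP1, x, hx, y, hy, hxy, hq⟩ := hP
  exact ⟨hP1, x, hx, y, hy, hxy, influence_mono hββ'.le hq⟩
end

section
/- Let a, b, c ∈ ℝ² and suppose q lies in the closed triangle (convex hull) of {a, b, c}. Then q lies in at least one of the three closed disks with diameters ab, ac, bc. -/
open scoped RealInnerProductSpace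

theorem triangle_covered_by_diameter_disks
    (a b c q : EuclideanSpace ℝ (Fin 2))
    (hq : q ∈ convexHull ℝ {a, b, c}) :
    ⟪a - q, b - q⟫ ≤ 0 ∨ ⟪a - q, c - q⟫ ≤ 0 ∨ ⟪b - q, c - q⟫ ≤ 0 := by
  rw [show ({a, b, c} : Set _) = insert a {b, c} from rfl,
    convexHull_insert ⟨b, by simp⟩, mem_convexJoin] at hq
  obtain ⟨x, hx, y, hy, hqy⟩ := hq
  rw [Set.mem_singleton_iff] at hx
  rw [hx] at hqy
  clear hx
  rw [convexHull_pair] at hy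
  obtain ⟨u, v, hu, hv, huv, rfl⟩ := hy
  obtain ⟨s, t, hs, ht, hst, rfl⟩ := hqy
  set q : EuclideanSpace ℝ (Fin 2) := s • a + t • (u • b + v • c) with hqdef
  have hzero : s • (a - q) + (t*u) • (b - q) + (t*v) • (c - q) = 0 := by
    have h1 : s + (t*u) + (t*v) = 1 := by nlinarith
    have h2 : s • (a - q) + (t*u) • (b - q) + (t*v) • (c - q)
        = (s • a + t • (u • b + v • c)) - (s + t*u + t*v) • q := by module
    rw [h1, one_smul, ← hqdef, sub_self] at h2
    exact h2
  clear_value q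
  have key : ∀ x : EuclideanSpace ℝ (Fin 2),
      s * ⟪x, a - q⟫ + (t*u) * ⟪x, b - q⟫ + (t*v) * ⟪x, c - q⟫ = 0 := by
    intro x
    have := congrArg (fun z => ⟪x, z⟫) hzero
    simp only [inner_add_right, real_inner_smul_right, inner_zero_right] at this
    exact this
  by_contra h
  push_neg at h
  obtain ⟨h1, h2, h3⟩ := h
  have e1 := key (a - q)
  have e2 := key (b - q)
  have e3 := key (c - q)
  have n1 : (0:ℝ) ≤ ⟪a - q, a - q⟫ := real_inner_self_nonneg
  have n2 : (0:ℝ) ≤ ⟪b - q, b - q⟫ := real_inner_self_nonneg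
  have n3 : (0:ℝ) ≤ ⟪c - q, c - q⟫ := real_inner_self_nonneg
  have c12 : ⟪b - q, a - q⟫ = ⟪a - q, b - q⟫ := real_inner_comm _ _
  have c13 : ⟪c - q, a - q⟫ = ⟪a - q, c - q⟫ := real_inner_comm _ _
  have c23 : ⟪c - q, b - q⟫ = ⟪b - q, c - q⟫ := real_inner_comm _ _
  have wu : (0:ℝ) ≤ t*u := mul_nonneg ht hu
  have wv : (0:ℝ) ≤ t*v := mul_nonneg ht hv
  have htuP : t*u*⟪a - q, b - q⟫ = 0 := by
    linarith [mul_nonneg hs n1, mul_nonneg wv h2.le, mul_nonneg wu h1.le, e1]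
  have htvQ : t*v*⟪a - q, c - q⟫ = 0 := by
    linarith [mul_nonneg hs n1, mul_nonneg wv h2.le, mul_nonneg wu h1.le, e1]
  have hsA : s*⟪a - q, a - q⟫ = 0 := by
    linarith [mul_nonneg hs n1, mul_nonneg wv h2.le, mul_nonneg wu h1.le, e1]
  have htu : t*u = 0 := by
    rcases mul_eq_zero.mp htuP with h | h
    · exact h
    · exact absurd h (ne_of_gt h1)
  have htv : t*v = 0 := by
    rcases mul_eq_zero.mp htvQ with h | h
    · exact h
    · exact absurd h (ne_of_gt h2)
  have ht0 : t = 0 := by nlinarith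
  have hs1 : s = 1 := by linarith
  have hA : ⟪a - q, a - q⟫ = (0:ℝ) := by
    rw [hs1, one_mul] at hsA; exact hsA
  have haq : a - q = 0 := by
    rwa [inner_self_eq_zero] at hA
  rw [haq, inner_zero_left] at h1
  exact lt_irrefl 0 h1
end

section
/- Let a, b, c ∈ ℝ² and suppose q lies in the closed triangle (convex hull) of {a, b, c}. Then q lies in at least two of the three closed disks with diameters ab, ac, bc. -/
open scoped RealInnerProductSpace

private lemma aux_no_two_pos {E : Type*} [NormedAddCommGroup E] [InnerProductSpace ℝ E]
    (u v w : E) (α β γ : ℝ) (hα : 0 ≤ α) (hβ : 0 ≤ β) (hγ : 0 ≤ γ) (hs : α + β + γ = 1)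
    (h : α • u + β • v + γ • w = 0) (h1 : 0 < ⟪u, v⟫) (h2 : 0 < ⟪u, w⟫) : False := by
  have hu : u ≠ 0 := by
    rintro rfl
    simp at h1
  have hup : (0:ℝ) < ⟪u, u⟫ := by
    rw [real_inner_self_eq_norm_sq]
    exact pow_pos (norm_pos_iff.2 hu) 2
  have hinner : α * ⟪u, u⟫ + β * ⟪u, v⟫ + γ * ⟪u, w⟫ = 0 := by
    have := congrArg (fun x => ⟪u, x⟫) h
    simpa [inner_add_right, real_inner_smul_right] using this
  have t1 : 0 ≤ α * ⟪u, u⟫ := mul_nonneg hα hup.le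
  have t2 : 0 ≤ β * ⟪u, v⟫ := mul_nonneg hβ h1.le
  have t3 : 0 ≤ γ * ⟪u, w⟫ := mul_nonneg hγ h2.le
  have eα : α = 0 := by
    have : α * ⟪u, u⟫ = 0 := le_antisymm (by linarith) t1
    rcases mul_eq_zero.1 this with h | h
    · exact h
    · exact absurd h hup.ne'
  have eβ : β = 0 := by
    have : β * ⟪u, v⟫ = 0 := le_antisymm (by linarith) t2
    rcases mul_eq_zero.1 this with h | h
    · exact h
    · exact absurd h h1.ne'
  have eγ : γ = 0 := by
    have : γ * ⟪u, w⟫ = 0 := le_antisymm (by linarith) t3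
    rcases mul_eq_zero.1 this with h | h
    · exact h
    · exact absurd h h2.ne'
  linarith

theorem triangle_point_in_two_diameter_disks
    (a b c q : EuclideanSpace ℝ (Fin 2))
    (hq : q ∈ convexHull ℝ {a, b, c}) :
    (⟪a - q, b - q⟫ ≤ 0 ∧ ⟪a - q, c - q⟫ ≤ 0) ∨
      (⟪a - q, b - q⟫ ≤ 0 ∧ ⟪b - q, c - q⟫ ≤ 0) ∨
      (⟪a - q, c - q⟫ ≤ 0 ∧ ⟪b - q, c - q⟫ ≤ 0) := by
  -- extract barycentric coordinates
  rw [show ({a, b, c} : Set (EuclideanSpace ℝ (Fin 2))) = insert a {b, c} from rfl,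
    convexHull_insert ⟨b, by simp⟩, convexHull_pair] at hq
  rw [mem_convexJoin] at hq
  obtain ⟨x, hx, z, hz, hqmem⟩ := hq
  simp only [Set.mem_singleton_iff] at hx
  obtain ⟨s, t, hs0, ht0, hst, hz⟩ := hz
  obtain ⟨p, r, hp0, hr0, hpr, hqe⟩ := hqmem
  rw [hx] at hqe
  set α := p
  set β := r * s
  set γ := r * t
  have hα : 0 ≤ α := hp0
  have hβ : 0 ≤ β := mul_nonneg hr0 hs0
  have hγ : 0 ≤ γ := mul_nonneg hr0 ht0
  have hsum : α + β + γ = 1 := by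
    have : β + γ = r := by rw [← mul_add, hst, mul_one]
    linarith
  have hcomb : α • (a - q) + β • (b - q) + γ • (c - q) = 0 := by
    have hq' : α • a + β • b + γ • c = q := by
      rw [← hqe, ← hz]; simp [smul_smul, smul_add]; abel
    calc α • (a - q) + β • (b - q) + γ • (c - q)
        = (α • a + β • b + γ • c) - (α + β + γ) • q := by
          simp [smul_sub, add_smul]; abel
      _ = 0 := by rw [hq', hsum, one_smul, sub_self]
  by_cases h1 : ⟪a - q, b - q⟫ ≤ 0
  · by_cases h2 : ⟪a - q, c - q⟫ ≤ 0
    · exact Or.inl ⟨h1, h2⟩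
    · push_neg at h2
      refine Or.inr (Or.inl ⟨h1, le_of_not_gt fun h3 => ?_⟩)
      exact aux_no_two_pos (c - q) (a - q) (b - q) γ α β hγ hα hβ (by linarith)
        (by rw [← hcomb]; abel) (by rwa [real_inner_comm]) (by rwa [real_inner_comm])
  · push_neg at h1
    refine Or.inr (Or.inr ⟨le_of_not_gt fun h2 => ?_, le_of_not_gt fun h3 => ?_⟩)
    · exact aux_no_two_pos (a - q) (b - q) (c - q) α β γ hα hβ hγ hsum hcomb h1 h2
    · exact aux_no_two_pos (b - q) (a - q) (c - q) β α γ hβ hα hγ (by linarith)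
        (by rw [← hcomb]; abel) (by rwa [real_inner_comm]) h3
end

section
/- Fix β > 1 and let q ∈ ℝ², and let x_i, x_j ∈ ℝ² with x_i ≠ x_j. If q lies strictly inside the slab S_∞(x_i,x_j) (i.e., 0 < ⟨q - x_i, x_j - x_i⟩ < ‖x_j - x_i‖² ) and q is not on segment x_ix_j, then there exists β₀ < ∞ such that for all β ≥ β₀, q ∈ S_β(x_i, x_j). -/
open scoped RealInnerProductSpace

lemma aux_ball_mem (q x y : EuclideanSpace ℝ (Fin 2)) (t : ℝ) (ht : 0 ≤ t)
    (h : ‖q - y‖ ^ 2 ≤ 2 * t * ⟪q - y, x - y⟫) :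
    q ∈ Metric.closedBall (t • x + (1 - t) • y) (t * ‖x - y‖) := by
  rw [Metric.mem_closedBall, dist_eq_norm]
  have hq : q - (t • x + (1 - t) • y) = (q - y) - t • (x - y) := by
    module
  rw [hq]
  have hr : 0 ≤ t * ‖x - y‖ := mul_nonneg ht (norm_nonneg _)
  rw [← pow_le_pow_iff_left₀ (norm_nonneg _) hr two_ne_zero]
  have hexp : ‖(q - y) - t • (x - y)‖ ^ 2
      = ‖q - y‖ ^ 2 - 2 * (t * ⟪q - y, x - y⟫) + ‖t • (x - y)‖ ^ 2 := by
    have := norm_sub_sq_real (q - y) (t • (x - y))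
    simpa [inner_smul_right] using this
  have hns : ‖t • (x - y)‖ ^ 2 = (t * ‖x - y‖) ^ 2 := by
    rw [norm_smul, Real.norm_eq_abs, mul_pow, sq_abs, mul_pow]
  nlinarith [hexp, hns]

theorem eventually_mem_beta_influence_of_mem_open_slab
    (q xi xj : EuclideanSpace ℝ (Fin 2)) (hne : xi ≠ xj)
    (h₁ : 0 < ⟪q - xi, xj - xi⟫) (h₂ : ⟪q - xi, xj - xi⟫ < ‖xj - xi‖ ^ 2)
    (hseg : q ∉ segment ℝ xi xj) :
    ∃ β₀ : ℝ, ∀ β ≥ β₀,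
      q ∈ Metric.closedBall ((β/2) • xi + (1 - β/2) • xj) ((β/2) * ‖xi - xj‖) ∩
          Metric.closedBall ((β/2) • xj + (1 - β/2) • xi) ((β/2) * ‖xi - xj‖) := by
  set a : ℝ := ⟪q - xi, xj - xi⟫ with ha
  have hb : (0:ℝ) < ⟪q - xj, xi - xj⟫ := by
    have : ⟪q - xj, xi - xj⟫ = ‖xj - xi‖ ^ 2 - a := by
      have : q - xj = (q - xi) - (xj - xi) := by abel
      rw [this, inner_sub_left]
      have h1 : (xi - xj : EuclideanSpace ℝ (Fin 2)) = -(xj - xi) := by abel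
      rw [h1, inner_neg_right, inner_neg_right, real_inner_self_eq_norm_sq]
      ring
    linarith
  set b : ℝ := ⟪q - xj, xi - xj⟫ with hbdef
  refine ⟨max 1 (max (‖q - xi‖ ^ 2 / a) (‖q - xj‖ ^ 2 / b)), fun β hβ => ?_⟩
  have hβ1 : (1:ℝ) ≤ β := le_trans (le_max_left _ _) hβ
  have ht : 0 ≤ β / 2 := by linarith
  have hβa : ‖q - xi‖ ^ 2 / a ≤ β := le_trans (le_trans (le_max_left _ _) (le_max_right _ _)) hβ
  have hβb : ‖q - xj‖ ^ 2 / b ≤ β := le_trans (le_trans (le_max_right _ _) (le_max_right _ _)) hβ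
  have hA : ‖q - xi‖ ^ 2 ≤ β * a := by
    rw [div_le_iff₀ h₁] at hβa; linarith
  have hB : ‖q - xj‖ ^ 2 ≤ β * b := by
    rw [div_le_iff₀ hb] at hβb; linarith
  constructor
  · -- ball centered near xj containing... center (β/2)xi + (1-β/2)xj : x = xi, y = xj
    have := aux_ball_mem q xi xj (β / 2) ht (by linarith)
    simpa [norm_sub_rev xi xj] using this
  · have := aux_ball_mem q xj xi (β / 2) ht (by linarith)
    simpa [norm_sub_rev xj xi] using this
end

section
/- The total number of faces in the incremental arrangement of Gabriel circles over n ≥ 2 collinear points satisfies C_f(n) = (1/12)(n⁴ - 6n³ + 23n² - 30n + 24), where C_f(n) = 2 + Σ_{m=3}^{n} (1 + Σ_{k=2}^{m-1} f_k(m)) and f_k(m) = 2(1 + (k-1)(m-k-1)). -/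
lemma myLinSum (m : ℕ) (hm : 2 ≤ m) :
    ∑ k ∈ Finset.Icc 2 (m - 1), 2 * ((k : ℝ) - 1) = ((m : ℝ) - 1) * ((m : ℝ) - 2) := by
  induction m, hm using Nat.le_induction with
  | base => norm_num
  | succ m hm ih =>
    have h1 : m + 1 - 1 = (m - 1) + 1 := by omega
    have h2 : m - 1 + 1 = m := by omega
    rw [h1, Finset.sum_Icc_succ_top (by omega), ih, h2]
    push_cast
    ring

lemma myInnerSum (m : ℕ) (hm : 2 ≤ m) :
    ∑ k ∈ Finset.Icc 2 (m - 1), 2 * (1 + ((k : ℝ) - 1) * ((m : ℝ) - k - 1)) =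
      2 * ((m : ℝ) - 2) + ((m : ℝ) - 1) * ((m : ℝ) - 2) * ((m : ℝ) - 3) / 3 := by
  induction m, hm using Nat.le_induction with
  | base => norm_num
  | succ m hm ih =>
    have h1 : m + 1 - 1 = (m - 1) + 1 := by omega
    have h2 : m - 1 + 1 = m := by omega
    rw [h1, Finset.sum_Icc_succ_top (by omega), h2]
    have ih' : ∑ k ∈ Finset.Icc 2 (m - 1), 2 * (1 + ((k : ℝ) - 1) * (((m+1 : ℕ) : ℝ) - k - 1)) =
        2 * ((m : ℝ) - 2) + ((m : ℝ) - 1) * ((m : ℝ) - 2) * ((m : ℝ) - 3) / 3 +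
        ∑ k ∈ Finset.Icc 2 (m - 1), 2 * ((k : ℝ) - 1) := by
      rw [← ih, ← Finset.sum_add_distrib]
      apply Finset.sum_congr rfl
      intro k _
      push_cast
      ring
    rw [ih', myLinSum m hm]
    push_cast
    ring

theorem total_faces_closed_form (n : ℕ) (hn : 2 ≤ n) :
    (2 : ℝ) + ∑ m ∈ Finset.Icc 3 n,
        (1 + ∑ k ∈ Finset.Icc 2 (m - 1), 2 * (1 + ((k : ℝ) - 1) * ((m : ℝ) - k - 1))) =
      ((n : ℝ) ^ 4 - 6 * n ^ 3 + 23 * n ^ 2 - 30 * n + 24) / 12 := by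
  induction n, hn using Nat.le_induction with
  | base => norm_num
  | succ n hn ih =>
    have hb : n + 1 - 1 = n := by omega
    rw [Finset.sum_Icc_succ_top (by omega)]
    have hi := myInnerSum (n+1) (by omega)
    rw [hb] at hi ⊢
    rw [hi, ← add_assoc, ih]
    push_cast
    ring
end

section
/- The recurrence f_k(n) = f_k(n-1) + 2δ¹_{(k-1)(n-2)} for 2 ≤ k ≤ n-1, n ≥ 3, with f_k(k) = 0, where δ^1_{ij} = 1 if i = j, i if i < j, 0 otherwise, has closed-form solution f_k(n) = 2(1 + (k-1)(n-k-1)). -/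
/-- δ^r_{ij} = r if i = j, i if i < j, 0 otherwise. -/
def deltaFn (r i j : ℤ) : ℤ := if i = j then r else if i < j then i else 0

theorem faces_recurrence_closed_form
    (f : ℕ → ℕ → ℤ)
    (hbase : ∀ k : ℕ, 2 ≤ k → f k k = 0)
    (hrec : ∀ k n : ℕ, 2 ≤ k → k ≤ n - 1 → 3 ≤ n →
      f k n = f k (n - 1) + 2 * deltaFn 1 ((k : ℤ) - 1) ((n : ℤ) - 2)) :
    ∀ k n : ℕ, 2 ≤ k → k ≤ n - 1 → 3 ≤ n →
      f k n = 2 * (1 + ((k : ℤ) - 1) * ((n : ℤ) - k - 1)) := by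
  intro k n
  induction n with
  | zero => intro _ _ h3; omega
  | succ m ih =>
    intro hk hkn h3
    have hkm : k ≤ m := by omega
    rw [hrec k (m+1) hk hkn h3]
    simp only [Nat.add_sub_cancel]
    rcases eq_or_lt_of_le hkm with heq | hlt
    · subst heq
      rw [hbase k hk]
      have he : (k:ℤ) + 1 - 2 = (k:ℤ) - 1 := by ring
      have hd : deltaFn 1 ((k:ℤ) - 1) ((k:ℤ) + 1 - 2) = 1 := by
        rw [he]; simp [deltaFn]
      push_cast
      rw [hd]
      ring
    · have hm3 : 3 ≤ m := by omega
      rw [ih hk (by omega) hm3]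
      have hd : deltaFn 1 ((k:ℤ) - 1) ((m:ℤ) + 1 - 2) = (k:ℤ) - 1 := by
        have h1 : ((k:ℤ) - 1) < (m:ℤ) + 1 - 2 := by
          have : (k:ℤ) + 1 ≤ m := by exact_mod_cast hlt
          linarith
        simp [deltaFn, h1, ne_of_lt h1]
      push_cast
      rw [hd]
      ring
end

section
/- Let b_1, ..., b_n be positive reals and h > max_i b_i. Form the 2n planar points x_i = (b_i, 0) and x_{n+i} = (b_i, h) for 1 ≤ i ≤ n. If all b_i are distinct, then the number of ordered pairs (j, k), j ≠ k, such that the origin O lies in the slab S_∞(x_j, x_k), equals n(n+1); i.e., the unnormalized SkD_∞ of O equals n(n+1)/2 = C(n+1, 2). -/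
open scoped RealInnerProductSpace Classical

private lemma inner_mk_aux (u v : Fin 2 → ℝ) :
    ⟪((WithLp.equiv 2 (Fin 2 → ℝ)).symm u : EuclideanSpace ℝ (Fin 2)),
      (WithLp.equiv 2 (Fin 2 → ℝ)).symm v⟫ = u 0 * v 0 + u 1 * v 1 := by
  simp [PiLp.inner_apply, Fin.sum_univ_two]
  ring

private lemma cond_iff_aux (a c : EuclideanSpace ℝ (Fin 2)) :
    (0 ≤ ⟪(0 : EuclideanSpace ℝ (Fin 2)) - a, c - a⟫ ∧
      ⟪(0 : EuclideanSpace ℝ (Fin 2)) - a, c - a⟫ ≤ ‖c - a‖ ^ 2) ↔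
    (⟪a, c⟫ ≤ ⟪a, a⟫ ∧ ⟪a, c⟫ ≤ ⟪c, c⟫) := by
  rw [← real_inner_self_eq_norm_sq]
  simp only [inner_sub_left, inner_sub_right, inner_zero_left, zero_sub, inner_neg_left]
  rw [real_inner_comm c a]
  constructor <;> rintro ⟨h1, h2⟩ <;> constructor <;> linarith

theorem slab_depth_of_origin_for_two_rows
    (n : ℕ) (b : Fin n → ℝ) (hpos : ∀ i, 0 < b i) (hinj : Function.Injective b)
    (h : ℝ) (hh : ∀ i, b i < h)
    (x : Fin n ⊕ Fin n → EuclideanSpace ℝ (Fin 2))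
    (hx₁ : ∀ i, x (Sum.inl i) = (WithLp.equiv 2 (Fin 2 → ℝ)).symm ![b i, 0])
    (hx₂ : ∀ i, x (Sum.inr i) = (WithLp.equiv 2 (Fin 2 → ℝ)).symm ![b i, h]) :
    (Finset.univ.offDiag.filter
        (fun p : (Fin n ⊕ Fin n) × (Fin n ⊕ Fin n) =>
          0 ≤ ⟪(0 : EuclideanSpace ℝ (Fin 2)) - x p.1, x p.2 - x p.1⟫ ∧
            ⟪(0 : EuclideanSpace ℝ (Fin 2)) - x p.1, x p.2 - x p.1⟫ ≤
              ‖x p.2 - x p.1‖ ^ 2)).card = n * (n + 1) := by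
  classical
  have hmain : (Finset.univ.offDiag.filter
        (fun p : (Fin n ⊕ Fin n) × (Fin n ⊕ Fin n) =>
          0 ≤ ⟪(0 : EuclideanSpace ℝ (Fin 2)) - x p.1, x p.2 - x p.1⟫ ∧
            ⟪(0 : EuclideanSpace ℝ (Fin 2)) - x p.1, x p.2 - x p.1⟫ ≤
              ‖x p.2 - x p.1‖ ^ 2)) =
      (Finset.univ.filter (fun ij : Fin n × Fin n => b ij.2 ≤ b ij.1)).image
        (fun ij => (Sum.inl ij.1, Sum.inr ij.2)) ∪
      (Finset.univ.filter (fun ij : Fin n × Fin n => b ij.1 ≤ b ij.2)).image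
        (fun ij => (Sum.inr ij.1, Sum.inl ij.2)) := by
    ext ⟨p1, p2⟩
    rw [Finset.mem_filter, Finset.mem_offDiag]
    rw [cond_iff_aux]
    rcases p1 with i | i <;> rcases p2 with j | j <;>
      simp only [hx₁, hx₂, inner_mk_aux, Matrix.cons_val_zero, Matrix.cons_val_one,
        Matrix.head_cons, Finset.mem_union, Finset.mem_image, Finset.mem_filter,
        Finset.mem_univ, true_and, Prod.mk.injEq, Sum.inl.injEq, Sum.inr.injEq,
        ne_eq, reduceCtorEq, not_false_eq_true, and_true, true_and, false_and,
        and_false, exists_false, or_false, false_or, Prod.exists]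
    · rw [iff_false]
      rintro ⟨hne, h1, h2⟩
      exact hne (hinj (le_antisymm (by nlinarith [hpos j]) (by nlinarith [hpos i])))
    · constructor
      · rintro ⟨h1, h2⟩
        exact ⟨i, j, by nlinarith [hpos i], rfl, rfl⟩
      · rintro ⟨a, c, hle, rfl, rfl⟩
        constructor <;> nlinarith [hpos a, hpos c, hh a, hh c]
    · constructor
      · rintro ⟨h1, h2⟩
        exact ⟨i, j, by nlinarith [hpos j], rfl, rfl⟩
      · rintro ⟨a, c, hle, rfl, rfl⟩
        constructor <;> nlinarith [hpos a, hpos c, hh a, hh c]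
    · rw [iff_false]
      rintro ⟨hne, h1, h2⟩
      exact hne (hinj (le_antisymm (by nlinarith [hpos j]) (by nlinarith [hpos i])))
  rw [hmain]
  have hdisj : Disjoint
      ((Finset.univ.filter (fun ij : Fin n × Fin n => b ij.2 ≤ b ij.1)).image
        (fun ij => ((Sum.inl ij.1 : Fin n ⊕ Fin n), (Sum.inr ij.2 : Fin n ⊕ Fin n))))
      ((Finset.univ.filter (fun ij : Fin n × Fin n => b ij.1 ≤ b ij.2)).image
        (fun ij => ((Sum.inr ij.1 : Fin n ⊕ Fin n), (Sum.inl ij.2 : Fin n ⊕ Fin n)))) := by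
    rw [Finset.disjoint_left]
    rintro ⟨p1, p2⟩ hp1 hp2
    simp only [Finset.mem_image, Prod.mk.injEq] at hp1 hp2
    obtain ⟨a, _, ha, _⟩ := hp1
    obtain ⟨a', _, ha', _⟩ := hp2
    rw [← ha] at ha'
    cases ha'
  rw [Finset.card_union_of_disjoint hdisj]
  have hinj1 : Function.Injective (fun ij : Fin n × Fin n =>
      ((Sum.inl ij.1 : Fin n ⊕ Fin n), (Sum.inr ij.2 : Fin n ⊕ Fin n))) := by
    rintro ⟨a, c⟩ ⟨a', c'⟩ hac
    simp_all [Prod.ext_iff]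
  have hinj2 : Function.Injective (fun ij : Fin n × Fin n =>
      ((Sum.inr ij.1 : Fin n ⊕ Fin n), (Sum.inl ij.2 : Fin n ⊕ Fin n))) := by
    rintro ⟨a, c⟩ ⟨a', c'⟩ hac
    simp_all [Prod.ext_iff]
  rw [Finset.card_image_of_injective _ hinj1, Finset.card_image_of_injective _ hinj2]
  have hunion : (Finset.univ.filter (fun ij : Fin n × Fin n => b ij.2 ≤ b ij.1)) ∪
      (Finset.univ.filter (fun ij : Fin n × Fin n => b ij.1 ≤ b ij.2)) = Finset.univ := by
    ext ⟨i, j⟩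
    simp [le_total (b j) (b i)]
  have hinter : (Finset.univ.filter (fun ij : Fin n × Fin n => b ij.2 ≤ b ij.1)) ∩
      (Finset.univ.filter (fun ij : Fin n × Fin n => b ij.1 ≤ b ij.2)) =
      (Finset.univ : Finset (Fin n)).diag := by
    ext ⟨i, j⟩
    simp only [Finset.mem_inter, Finset.mem_filter, Finset.mem_univ, true_and,
      Finset.mem_diag]
    constructor
    · rintro ⟨h1, h2⟩
      exact hinj (le_antisymm h2 h1)
    · rintro rfl
      exact ⟨le_refl _, le_refl _⟩
  have hcards := Finset.card_union_add_card_inter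
    (Finset.univ.filter (fun ij : Fin n × Fin n => b ij.2 ≤ b ij.1))
    (Finset.univ.filter (fun ij : Fin n × Fin n => b ij.1 ≤ b ij.2))
  rw [hunion, hinter, Finset.diag_card] at hcards
  simp only [Finset.card_univ, Fintype.card_prod, Fintype.card_fin] at hcards
  rw [← hcards]
  ring
end
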